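/- Every chordal graph that is not a complete graph contains two non-adjacent simplicial vertices. -/

import Mathlib

open SimpleGraph

/-- A graph is chordal if it has no induced cycle of length at least 4. -/
def Chordal {V : Type*} (G : SimpleGraph V) : Prop :=
  ∀ n : ℕ, 4 ≤ n → IsEmpty (cycleGraph n ↪g G)

/-- A vertex is simplicial if its (closed, equivalently open) neighborhood is a clique. -/
def IsSimplicial {V : Type*} (G : SimpleGraph V) (v : V) : Prop :=
  G.IsClique (G.neighborSet v)


/-- A walk in a graph, represented as a function from indices. -/
structure NWalk {V : Type*} (G : SimpleGraph V) (x y : V) where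
  len : ℕ
  f : ℕ → V
  h0 : f 0 = x
  hl : f len = y
  adj : ∀ i, i < len → G.Adj (f i) (f (i + 1))

namespace NWalk

variable {V : Type*} {G : SimpleGraph V} {x y z : V}

/-- The walk of length 0. -/
def nil (v : V) : NWalk G v v := ⟨0, fun _ => v, rfl, rfl, by omega⟩

/-- The walk along a single edge. -/
def edge (h : G.Adj x y) : NWalk G x y :=
  ⟨1, fun i => if i = 0 then x else y, rfl, rfl, by
    intro i hi
    have : i = 0 := by omega
    simpa [this] using h⟩

lemma edge_verts (h : G.Adj x y) : ∀ i, (edge h).f i = x ∨ (edge h).f i = y := by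
  intro i
  simp only [edge]
  split <;> simp

/-- Reversal of a walk. -/
def reverse (p : NWalk G x y) : NWalk G y x :=
  ⟨p.len, fun i => p.f (p.len - i), by simp [p.hl], by simp [p.h0], by
    intro i hi
    show G.Adj (p.f (p.len - i)) (p.f (p.len - (i+1)))
    have h1 : p.len - i = (p.len - (i + 1)) + 1 := by omega
    rw [h1]
    exact (p.adj _ (by omega)).symm⟩

lemma reverse_verts (p : NWalk G x y) (i : ℕ) : p.reverse.f i = p.f (p.len - i) := rfl

@[simp] lemma reverse_len (p : NWalk G x y) : p.reverse.len = p.len := rfl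

/-- Concatenation of walks. -/
def append (p : NWalk G x y) (q : NWalk G y z) : NWalk G x z :=
  ⟨p.len + q.len, fun i => if i < p.len then p.f i else q.f (i - p.len), by
    by_cases h : 0 < p.len
    · simp [h, p.h0]
    · have h0 : p.len = 0 := by omega
      have hxy : x = y := by
        have h2 := p.hl; rw [h0] at h2; rw [← p.h0, h2]
      simp [h0, hxy, q.h0]
    , by
    have : ¬ (p.len + q.len < p.len) := by omega
    simp [this, q.hl]
    , by
    intro i hi
    by_cases h1 : i + 1 < p.len
    · have h2 : i < p.len := by omega
      simp only [if_pos h1, if_pos h2]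
      exact p.adj i (by omega)
    · by_cases h2 : i < p.len
      · have h3 : i + 1 = p.len := by omega
        have h4 : q.f (i + 1 - p.len) = p.f p.len := by
          rw [h3]; simp [q.h0, p.hl]
        simp only [if_neg h1, if_pos h2, h4]
        rw [← h3]
        exact p.adj i h2
      · have h3 : ¬ (i + 1 < p.len) := by omega
        simp only [if_neg h3, if_neg h2]
        have h4 : i + 1 - p.len = (i - p.len) + 1 := by omega
        rw [h4]
        exact q.adj _ (by omega)⟩

@[simp] lemma append_len (p : NWalk G x y) (q : NWalk G y z) :
    (p.append q).len = p.len + q.len := rfl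

lemma append_verts (p : NWalk G x y) (q : NWalk G y z) (i : ℕ) :
    (∃ j ≤ p.len, (p.append q).f i = p.f j) ∨ (∃ j ≤ q.len, i ≤ p.len + q.len → (p.append q).f i = q.f j) := by
  by_cases h : i < p.len
  · exact Or.inl ⟨i, by omega, by simp [append, h]⟩
  · by_cases h2 : i ≤ p.len + q.len
    · exact Or.inr ⟨i - p.len, by omega, fun _ => by simp [append, h]⟩
    · exact Or.inr ⟨0, by omega, fun hc => absurd hc h2⟩

/-- Simpler vertex membership for append. -/
lemma append_verts' (p : NWalk G x y) (q : NWalk G y z) {A : Set V}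
    (hp : ∀ i ≤ p.len, p.f i ∈ A) (hq : ∀ i ≤ q.len, q.f i ∈ A) :
    ∀ i ≤ (p.append q).len, (p.append q).f i ∈ A := by
  intro i hi
  simp only [append_len] at hi
  by_cases h : i < p.len
  · simpa [append, h] using hp i (by omega)
  · simpa [append, h] using hq (i - p.len) (by omega)

/-- Prefix of a walk. -/
def take (p : NWalk G x y) (n : ℕ) (hn : n ≤ p.len) : NWalk G x (p.f n) :=
  ⟨n, p.f, p.h0, rfl, fun i hi => p.adj i (by omega)⟩

end NWalk

namespace NWalk

variable {V : Type*} {G : SimpleGraph V} {x y z : V}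

/-- Shortcut a walk along a repeated vertex. -/
lemma shortcut_eq (p : NWalk G x y) {i j : ℕ} (hij : i < j) (hj : j ≤ p.len)
    (he : p.f i = p.f j) :
    ∃ q : NWalk G x y, q.len = p.len - (j - i) ∧
      ∀ k ≤ q.len, ∃ m ≤ p.len, q.f k = p.f m := by
  refine ⟨⟨p.len - (j - i), fun k => if k ≤ i then p.f k else p.f (k + (j - i)), ?_, ?_, ?_⟩, rfl, ?_⟩
  · simp [p.h0]
  · by_cases h : p.len - (j - i) ≤ i
    · have h1 : p.len = j := by omega
      have h2 : p.len - (j - i) = i := by omega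
      simp only [h2, if_pos le_rfl]
      rw [he, ← h1, p.hl]
    · have h2 : p.len - (j - i) + (j - i) = p.len := by omega
      simp only [if_neg h, h2, p.hl]
  · intro k hk
    by_cases h1 : k + 1 ≤ i
    · have h2 : k ≤ i := by omega
      simp only [if_pos h1, if_pos h2]
      exact p.adj k (by omega)
    · by_cases h2 : k ≤ i
      · have h3 : k = i := by omega
        have h4 : k + 1 + (j - i) = j + 1 := by omega
        simp only [if_pos h2, if_neg h1, h4]
        rw [h3, he]
        exact p.adj j (by omega)
      · simp only [if_neg h1, if_neg h2]
        have h4 : k + 1 + (j - i) = (k + (j - i)) + 1 := by omega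
        rw [h4]
        exact p.adj _ (by omega)
  · intro k hk
    dsimp only at hk
    by_cases h : k ≤ i
    · exact ⟨k, by omega, by simp [h]⟩
    · exact ⟨k + (j - i), by omega, by simp [h]⟩

/-- Shortcut a walk along a chord. -/
lemma shortcut_adj (p : NWalk G x y) {i j : ℕ} (hij : i + 1 < j) (hj : j ≤ p.len)
    (ha : G.Adj (p.f i) (p.f j)) :
    ∃ q : NWalk G x y, q.len = i + 1 + (p.len - j) ∧
      ∀ k ≤ q.len, ∃ m ≤ p.len, q.f k = p.f m := by
  refine ⟨⟨i + 1 + (p.len - j), fun k => if k ≤ i then p.f k else p.f (k - (i + 1) + j), ?_, ?_, ?_⟩, rfl, ?_⟩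
  · simp [p.h0]
  · have h : ¬ (i + 1 + (p.len - j) ≤ i) := by omega
    have h2 : i + 1 + (p.len - j) - (i + 1) + j = p.len := by omega
    simp only [if_neg h, h2, p.hl]
  · intro k hk
    by_cases h1 : k + 1 ≤ i
    · have h2 : k ≤ i := by omega
      simp only [if_pos h1, if_pos h2]
      exact p.adj k (by omega)
    · by_cases h2 : k ≤ i
      · have h3 : k = i := by omega
        have h4 : k + 1 - (i + 1) + j = j := by omega
        simp only [if_pos h2, if_neg h1, h4]
        rw [h3]
        exact ha
      · simp only [if_neg h1, if_neg h2]
        have h4 : k + 1 - (i + 1) + j = (k - (i + 1) + j) + 1 := by omega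
        rw [h4]
        exact p.adj _ (by omega)
  · intro k hk
    dsimp only at hk
    by_cases h : k ≤ i
    · exact ⟨k, by omega, by simp [h]⟩
    · exact ⟨k - (i + 1) + j, by omega, by simp [h]⟩

end NWalk

/-- Existence of a minimal (hence induced) path within a vertex set. -/
lemma exists_induced_path {V : Type*} {G : SimpleGraph V} {A : Set V} {x y : V}
    (hxy : x ≠ y) (hnadj : ¬ G.Adj x y)
    (hex : ∃ p : NWalk G x y, ∀ i ≤ p.len, p.f i ∈ A) :
    ∃ p : NWalk G x y, 2 ≤ p.len ∧ (∀ i ≤ p.len, p.f i ∈ A) ∧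
      (∀ i j, i < j → j ≤ p.len → p.f i ≠ p.f j) ∧
      (∀ i j, i < j → j ≤ p.len → j ≠ i + 1 → ¬ G.Adj (p.f i) (p.f j)) := by
  classical
  set E : Set ℕ := {n | ∃ p : NWalk G x y, (∀ i ≤ p.len, p.f i ∈ A) ∧ p.len = n} with hE
  have hEne : E.Nonempty := by
    obtain ⟨p, hp⟩ := hex
    exact ⟨p.len, p, hp, rfl⟩
  obtain ⟨p, hpA, hplen⟩ := Nat.sInf_mem hEne
  have hmin : ∀ q : NWalk G x y, (∀ i ≤ q.len, q.f i ∈ A) → p.len ≤ q.len := by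
    intro q hq
    rw [hplen]
    exact Nat.sInf_le ⟨q, hq, rfl⟩
  have hlen2 : 2 ≤ p.len := by
    by_contra hcon
    have h0 : p.len = 0 ∨ p.len = 1 := by omega
    rcases h0 with h0 | h0
    · have hl := p.hl; rw [h0] at hl
      exact hxy (by rw [← p.h0, hl])
    · have hl := p.hl; rw [h0] at hl
      have ha := p.adj 0 (by omega)
      rw [p.h0] at ha
      exact hnadj (by rwa [show (0:ℕ)+1 = 1 from rfl, hl] at ha)
  have hinj : ∀ i j, i < j → j ≤ p.len → p.f i ≠ p.f j := by
    intro i j hij hj he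
    obtain ⟨q, hqlen, hqv⟩ := p.shortcut_eq hij hj he
    have : p.len ≤ q.len := hmin q (fun k hk => by
      obtain ⟨m, hm, hqm⟩ := hqv k hk
      rw [hqm]; exact hpA m hm)
    omega
  have hind : ∀ i j, i < j → j ≤ p.len → j ≠ i + 1 → ¬ G.Adj (p.f i) (p.f j) := by
    intro i j hij hj hne hadj
    obtain ⟨q, hqlen, hqv⟩ := p.shortcut_adj (by omega) hj hadj
    have : p.len ≤ q.len := hmin q (fun k hk => by
      obtain ⟨m, hm, hqm⟩ := hqv k hk
      rw [hqm]; exact hpA m hm)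
    omega
  exact ⟨p, hlen2, hpA, hinj, hind⟩

lemma fin_sub_eq_one {m : ℕ} (i j : Fin (m + 2)) :
    i - j = 1 ↔ (i.val = j.val + 1 ∨ (j.val = m + 1 ∧ i.val = 0)) := by
  rw [sub_eq_iff_eq_add, Fin.ext_iff, Fin.val_add, Fin.val_one]
  rcases eq_or_ne j.val (m + 1) with h | h
  · rw [h, show 1 + (m + 1) = m + 2 from by omega, Nat.mod_self]
    have := i.isLt
    omega
  · have hj := j.isLt
    rw [Nat.mod_eq_of_lt (by omega)]
    have := i.isLt
    omega

lemma cycle_emb {V : Type*} {G : SimpleGraph V} {n : ℕ} (hn : 4 ≤ n) (d : ℕ → V)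
    (hper : d n = d 0)
    (hadj : ∀ i, i < n → G.Adj (d i) (d (i + 1)))
    (hinj : ∀ i j, i < j → j < n → d i ≠ d j)
    (hind : ∀ i j, i < j → j < n → j ≠ i + 1 → ¬(i = 0 ∧ j = n - 1) → ¬ G.Adj (d i) (d j)) :
    Nonempty (SimpleGraph.cycleGraph n ↪g G) := by
  obtain ⟨m, rfl⟩ : ∃ m, n = m + 2 := ⟨n - 2, by omega⟩
  have hcyc : ∀ i j : Fin (m + 2), (SimpleGraph.cycleGraph (m + 2)).Adj i j ↔
      (j.val = i.val + 1 ∨ i.val = j.val + 1 ∨ (i.val = 0 ∧ j.val = m + 1) ∨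
        (j.val = 0 ∧ i.val = m + 1)) := by
    intro i j
    rw [SimpleGraph.cycleGraph_adj, fin_sub_eq_one, fin_sub_eq_one]
    omega
  refine ⟨⟨⟨fun i => d i.val, ?_⟩, ?_⟩⟩
  · intro i j hij
    by_contra hne
    have hv : i.val ≠ j.val := fun h => hne (Fin.ext h)
    rcases Nat.lt_or_ge i.val j.val with h | h
    · exact hinj _ _ h j.isLt hij
    · exact hinj _ _ (by omega) i.isLt hij.symm
  · intro i j
    show G.Adj (d i.val) (d j.val) ↔ _
    rw [hcyc]
    have hii := i.isLt
    have hjj := j.isLt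
    constructor
    · intro hadj'
      by_contra hcon
      push_neg at hcon
      obtain ⟨h1, h2, h3, h4⟩ := hcon
      rcases Nat.lt_trichotomy i.val j.val with h | h | h
      · refine hind i.val j.val h hjj (fun hh => h1 hh) ?_ hadj'
        rintro ⟨ha, hb⟩
        exact absurd (h3 ha) (by omega)
      · rw [h] at hadj'
        exact G.loopless.irrefl _ hadj'
      · refine hind j.val i.val h hii (fun hh => h2 hh) ?_ hadj'.symm
        rintro ⟨ha, hb⟩
        exact absurd (h4 ha) (by omega)
    · intro hc
      rcases hc with h | h | ⟨h1, h2⟩ | ⟨h1, h2⟩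
      · rw [h]
        exact hadj i.val (by omega)
      · rw [h]
        exact (hadj j.val (by omega)).symm
      · rw [h1, h2]
        have h5 := hadj (m + 1) (by omega)
        rw [show m + 1 + 1 = m + 2 from rfl, hper] at h5
        exact h5.symm
      · rw [h1, h2]
        have h5 := hadj (m + 1) (by omega)
        rw [show m + 1 + 1 = m + 2 from rfl, hper] at h5
        exact h5

lemma discrete_ivt (g : ℕ → Prop) : ∀ n : ℕ, ¬ g 0 → g n → ∃ i, i < n ∧ ¬ g i ∧ g (i + 1) := by
  intro n
  induction n with
  | zero => intro h0 hn; exact absurd hn h0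
  | succ k ih =>
    intro h0 hn
    by_cases hk : g k
    · obtain ⟨i, hi, h⟩ := ih h0 hk
      exact ⟨i, by omega, h⟩
    · exact ⟨k, by omega, hk, hn⟩

/-- The set of vertices reachable from `a` by walks avoiding `S`. -/
def ReachSet {V : Type*} (G : SimpleGraph V) (S : Set V) (a : V) : Set V :=
  {v | ∃ p : NWalk G a v, ∀ i, i ≤ p.len → p.f i ∉ S}

section ReachSet

variable {V : Type*} {G : SimpleGraph V} {S : Set V} {a b v w : V}

lemma mem_reachSet_self (ha : a ∉ S) : a ∈ ReachSet G S a :=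
  ⟨NWalk.nil a, fun _ _ => ha⟩

lemma reachSet_not_mem (h : v ∈ ReachSet G S a) : v ∉ S := by
  obtain ⟨p, hp⟩ := h
  have := hp p.len le_rfl
  rwa [p.hl] at this

lemma reachSet_adj (h : v ∈ ReachSet G S a) (hvw : G.Adj v w) (hw : w ∉ S) :
    w ∈ ReachSet G S a := by
  obtain ⟨p, hp⟩ := h
  refine ⟨p.append (NWalk.edge hvw), ?_⟩
  intro i hi
  refine NWalk.append_verts' (A := {z | z ∉ S}) p _ hp ?_ i hi
  intro j _
  rcases NWalk.edge_verts hvw j with h1 | h1 <;> rw [h1]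
  · exact reachSet_not_mem ⟨p, hp⟩
  · exact hw

lemma walk_verts_mem_reachSet (p : NWalk G a v) (hp : ∀ i, i ≤ p.len → p.f i ∉ S) :
    ∀ i, i ≤ p.len → p.f i ∈ ReachSet G S a := by
  intro i hi
  exact ⟨p.take i hi, fun j hj => hp j (le_trans hj hi)⟩

lemma reachSet_disj (hsep : ∀ p : NWalk G a b, ∃ i, i ≤ p.len ∧ p.f i ∈ S) :
    ∀ v, v ∈ ReachSet G S a → v ∈ ReachSet G S b → False := by
  rintro v ⟨p, hp⟩ ⟨q, hq⟩
  obtain ⟨i, hi, hiS⟩ := hsep (p.append q.reverse)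
  refine NWalk.append_verts' (A := {z | z ∉ S}) p q.reverse hp ?_ i hi hiS
  intro j hj
  rw [NWalk.reverse_verts]
  exact hq _ (by omega)

lemma reachSet_no_edge (hsep : ∀ p : NWalk G a b, ∃ i, i ≤ p.len ∧ p.f i ∈ S)
    (hv : v ∈ ReachSet G S a) (hw : w ∈ ReachSet G S b) : ¬ G.Adj v w := by
  intro hadj
  exact reachSet_disj hsep w (reachSet_adj hv hadj (reachSet_not_mem hw)) hw

/-- From a walk that avoids `S` except at `x`, but must hit `S`, extract a neighbor of `x`
reachable from the start avoiding `S`. -/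
lemma first_hit {x u : V} (p : NWalk G u v) (hu : u ∉ S) (hv : v ∉ S)
    (hav : ∀ i, i ≤ p.len → p.f i ∈ S → p.f i = x)
    (hhit : ∃ i, i ≤ p.len ∧ p.f i ∈ S) :
    ∃ w ∈ ReachSet G S u, G.Adj x w := by
  classical
  set T : Set ℕ := {i | i ≤ p.len ∧ p.f i ∈ S} with hT
  have hTne : T.Nonempty := hhit
  obtain ⟨hkle, hkS⟩ : sInf T ∈ T := Nat.sInf_mem hTne
  set k := sInf T with hk
  have hk0 : k ≠ 0 := by
    intro h
    rw [h, p.h0] at hkS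
    exact hu hkS
  have hklt : k < p.len := by
    rcases eq_or_lt_of_le hkle with h | h
    · rw [h, p.hl] at hkS
      exact absurd hkS hv
    · exact h
  have hkx : p.f k = x := hav k hkle hkS
  have hbefore : ∀ m, m < k → p.f m ∉ S := by
    intro m hm hmS
    exact Nat.notMem_of_lt_sInf hm ⟨by omega, hmS⟩
  refine ⟨p.f (k - 1), ?_, ?_⟩
  · refine ⟨p.take (k - 1) (by omega), ?_⟩
    intro i hi
    have hi' : i ≤ k - 1 := hi
    exact hbefore i (by omega)
  · have h5 := p.adj (k - 1) (by omega)
    rw [show k - 1 + 1 = k from by omega, hkx] at h5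
    exact h5.symm

end ReachSet

universe u

lemma dirac_aux : ∀ (N : ℕ) (V : Type u) [Fintype V] (G : SimpleGraph V),
    Fintype.card V ≤ N → Chordal G → (∃ u w : V, u ≠ w ∧ ¬ G.Adj u w) →
    ∃ v w : V, v ≠ w ∧ ¬ G.Adj v w ∧ IsSimplicial G v ∧ IsSimplicial G w := by
  intro N
  induction N with
  | zero =>
    intro V _ G hcard _ hnc
    obtain ⟨u, _, _, _⟩ := hnc
    have : 0 < Fintype.card V := Fintype.card_pos_iff.mpr ⟨u⟩
    omega
  | succ N IH =>
    intro V _ G hcard hch hnc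
    classical
    obtain ⟨a, b, hab, hnadj⟩ := hnc
    set Sep : Set (Set V) :=
      {S | a ∉ S ∧ b ∉ S ∧ ∀ p : NWalk G a b, ∃ i, i ≤ p.len ∧ p.f i ∈ S} with hSepdef
    have hfull : {v : V | v ≠ a ∧ v ≠ b} ∈ Sep := by
      refine ⟨by simp, by simp, ?_⟩
      intro p
      by_contra hcon
      push_neg at hcon
      have hdi : ∀ i, i ≤ p.len → p.f i = a ∨ p.f i = b := by
        intro i hi
        have := hcon i hi
        simp only [Set.mem_setOf_eq, not_and_or, not_not] at this
        tauto
      obtain ⟨i, hi, hni, hgi⟩ := discrete_ivt (fun i => p.f i = b) p.len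
        (by show p.f 0 ≠ b; rw [p.h0]; exact hab) p.hl
      have ha' : p.f i = a := by
        rcases hdi i (by omega) with h | h
        · exact h
        · exact absurd h hni
      have := p.adj i hi
      rw [ha', hgi] at this
      exact hnadj this
    have hSepNe : Sep.Nonempty := ⟨_, hfull⟩
    obtain ⟨S, hSmem, hScard⟩ : ∃ S ∈ Sep, S.ncard = sInf (Set.ncard '' Sep) := by
      obtain ⟨S, hS, hc⟩ := Nat.sInf_mem (hSepNe.image Set.ncard)
      exact ⟨S, hS, hc⟩
    obtain ⟨haS, hbS, hsep⟩ := hSmem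
    have hmin : ∀ x ∈ S, S \ {x} ∉ Sep := by
      intro x hx hmem
      have h1 : (S \ {x}).ncard < S.ncard :=
        Set.ncard_diff_singleton_lt_of_mem hx (Set.toFinite S)
      have h2 : sInf (Set.ncard '' Sep) ≤ (S \ {x}).ncard := Nat.sInf_le ⟨_, hmem, rfl⟩
      omega
    set A : Set V := ReachSet G S a with hAdef
    set B : Set V := ReachSet G S b with hBdef
    have haA : a ∈ A := mem_reachSet_self haS
    have hbB : b ∈ B := mem_reachSet_self hbS
    have hAB : ∀ v, v ∈ A → v ∈ B → False := reachSet_disj hsep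
    have hnoAB : ∀ v w, v ∈ A → w ∈ B → ¬ G.Adj v w := fun v w hv hw => reachSet_no_edge hsep hv hw
    -- every separator vertex has neighbors on both sides
    have hnbr : ∀ x ∈ S, (∃ u ∈ A, G.Adj x u) ∧ (∃ u ∈ B, G.Adj x u) := by
      intro x hx
      have hnot := hmin x hx
      simp only [hSepdef, Set.mem_setOf_eq, not_and_or, not_not] at hnot
      have hnot2 : ∃ p : NWalk G a b, ∀ i, i ≤ p.len → p.f i ∉ S \ {x} := by
        rcases hnot with h | h | h
        · exact absurd h.1 haS
        · exact absurd h.1 hbS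
        · push_neg at h
          exact h
      obtain ⟨p, hp⟩ := hnot2
      have hav : ∀ i, i ≤ p.len → p.f i ∈ S → p.f i = x := by
        intro i hi hiS
        by_contra hne
        exact hp i hi ⟨hiS, hne⟩
      constructor
      · obtain ⟨w, hwA, hadj⟩ := first_hit p haS hbS hav (hsep p)
        exact ⟨w, hwA, hadj⟩
      · have hav' : ∀ i, i ≤ p.reverse.len → p.reverse.f i ∈ S → p.reverse.f i = x := by
          intro i hi hiS
          exact hav _ (by omega) hiS
        have hhit' : ∃ i, i ≤ p.reverse.len ∧ p.reverse.f i ∈ S := by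
          obtain ⟨i, hi, hiS⟩ := hsep p
          refine ⟨p.len - i, by simp, ?_⟩
          rw [NWalk.reverse_verts, show p.len - (p.len - i) = i from by omega]
          exact hiS
        obtain ⟨w, hwB, hadj⟩ := first_hit p.reverse hbS haS hav' hhit'
        exact ⟨w, hwB, hadj⟩
    -- S is a clique
    have hSclique : ∀ x ∈ S, ∀ y ∈ S, x ≠ y → G.Adj x y := by
      intro x hx y hy hxy
      by_contra hnxy
      obtain ⟨⟨ux, huxA, hux⟩, ⟨vx, hvxB, hvx⟩⟩ := hnbr x hx
      obtain ⟨⟨uy, huyA, huy⟩, ⟨vy, hvyB, hvy⟩⟩ := hnbr y hy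
      -- a walk x → y with all vertices in A ∪ {x, y}
      have hexA : ∃ p : NWalk G x y, ∀ i, i ≤ p.len → p.f i ∈ A ∪ {x, y} := by
        obtain ⟨pux, hpux⟩ := id huxA
        obtain ⟨puy, hpuy⟩ := id huyA
        refine ⟨(NWalk.edge hux).append ((pux.reverse.append puy).append (NWalk.edge huy.symm)), ?_⟩
        apply NWalk.append_verts'
        · intro i _
          rcases NWalk.edge_verts hux i with h | h <;> rw [h]
          · exact Or.inr (Or.inl rfl)
          · exact Or.inl huxA
        · apply NWalk.append_verts'
          · apply NWalk.append_verts'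
            · intro i hi
              rw [NWalk.reverse_verts]
              exact Or.inl (walk_verts_mem_reachSet pux hpux _ (by omega))
            · intro i hi
              exact Or.inl (walk_verts_mem_reachSet puy hpuy i hi)
          · intro i _
            rcases NWalk.edge_verts huy.symm i with h | h <;> rw [h]
            · exact Or.inl huyA
            · exact Or.inr (Or.inr rfl)
      have hexB : ∃ p : NWalk G x y, ∀ i, i ≤ p.len → p.f i ∈ B ∪ {x, y} := by
        obtain ⟨pvx, hpvx⟩ := id hvxB
        obtain ⟨pvy, hpvy⟩ := id hvyB
        refine ⟨(NWalk.edge hvx).append ((pvx.reverse.append pvy).append (NWalk.edge hvy.symm)), ?_⟩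
        apply NWalk.append_verts'
        · intro i _
          rcases NWalk.edge_verts hvx i with h | h <;> rw [h]
          · exact Or.inr (Or.inl rfl)
          · exact Or.inl hvxB
        · apply NWalk.append_verts'
          · apply NWalk.append_verts'
            · intro i hi
              rw [NWalk.reverse_verts]
              exact Or.inl (walk_verts_mem_reachSet pvx hpvx _ (by omega))
            · intro i hi
              exact Or.inl (walk_verts_mem_reachSet pvy hpvy i hi)
          · intro i _
            rcases NWalk.edge_verts hvy.symm i with h | h <;> rw [h]
            · exact Or.inl hvyB
            · exact Or.inr (Or.inr rfl)
      obtain ⟨P1, hP1len, hP1verts, hP1inj, hP1ind⟩ := exists_induced_path hxy hnxy hexA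
      obtain ⟨P2, hP2len, hP2verts, hP2inj, hP2ind⟩ := exists_induced_path hxy hnxy hexB
      have hP1int : ∀ i, 0 < i → i < P1.len → P1.f i ∈ A := by
        intro i h0 hl
        rcases hP1verts i (by omega) with h | h
        · exact h
        · rcases h with h | h
          · exact absurd (by rw [P1.h0, h]) (hP1inj 0 i h0 (by omega))
          · exact absurd (by rw [P1.hl, h] : P1.f i = P1.f P1.len) (fun he => hP1inj i P1.len hl le_rfl he)
      have hP2int : ∀ i, 0 < i → i < P2.len → P2.f i ∈ B := by
        intro i h0 hl
        rcases hP2verts i (by omega) with h | h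
        · exact h
        · rcases h with h | h
          · exact absurd (by rw [P2.h0, h]) (hP2inj 0 i h0 (by omega))
          · exact absurd (by rw [P2.hl, h] : P2.f i = P2.f P2.len) (fun he => hP2inj i P2.len hl le_rfl he)
      set n := P1.len + P2.len with hndef
      have hn4 : 4 ≤ n := by omega
      set d : ℕ → V := fun i => if i ≤ P1.len then P1.f i else P2.f (n - i) with hddef
      have hd_per : d n = d 0 := by
        have h1 : ¬ (n ≤ P1.len) := by omega
        simp only [hddef, if_pos (by omega : (0:ℕ) ≤ P1.len), if_neg h1]
        rw [Nat.sub_self, P2.h0, P1.h0]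
      have hd_adj : ∀ i, i < n → G.Adj (d i) (d (i + 1)) := by
        intro i hi
        by_cases h1 : i + 1 ≤ P1.len
        · simp only [hddef, if_pos (by omega : i ≤ P1.len), if_pos h1]
          exact P1.adj i (by omega)
        · by_cases h2 : i ≤ P1.len
          · have h3 : i = P1.len := by omega
            simp only [hddef, if_pos h2, if_neg h1]
            rw [h3, P1.hl]
            have h4 : n - (P1.len + 1) = P2.len - 1 := by omega
            rw [h4]
            have h5 := P2.adj (P2.len - 1) (by omega)
            rw [show P2.len - 1 + 1 = P2.len from by omega, P2.hl] at h5
            exact h5.symm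
          · simp only [hddef, if_neg h2, if_neg (by omega : ¬ (i + 1 ≤ P1.len))]
            have h5 := P2.adj (n - (i + 1)) (by omega)
            rw [show n - (i + 1) + 1 = n - i from by omega] at h5
            exact h5.symm
      have hd_inj : ∀ i j, i < j → j < n → d i ≠ d j := by
        intro i j hij hj
        by_cases h1 : j ≤ P1.len
        · simp only [hddef, if_pos (by omega : i ≤ P1.len), if_pos h1]
          exact hP1inj i j hij h1
        · by_cases h2 : i ≤ P1.len
          · simp only [hddef, if_pos h2, if_neg h1]
            have hjB : P2.f (n - j) ∈ B := hP2int (n - j) (by omega) (by omega)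
            intro he
            rcases hP1verts i (by omega) with h | h
            · rw [he] at h
              exact hAB _ h hjB
            · rcases h with h | h
              · rw [h] at he
                exact reachSet_not_mem hjB (by rw [← he]; exact hx)
              · rw [h] at he
                exact reachSet_not_mem hjB (by rw [← he]; exact hy)
          · simp only [hddef, if_neg h2, if_neg (by omega : ¬ (j ≤ P1.len))]
            exact fun he => hP2inj (n - j) (n - i) (by omega) (by omega) he.symm
      have hd_ind : ∀ i j, i < j → j < n → j ≠ i + 1 → ¬ (i = 0 ∧ j = n - 1) →
          ¬ G.Adj (d i) (d j) := by
        intro i j hij hj hne hnw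
        by_cases h1 : j ≤ P1.len
        · simp only [hddef, if_pos (by omega : i ≤ P1.len), if_pos h1]
          exact hP1ind i j hij h1 hne
        · by_cases h2 : i ≤ P1.len
          · simp only [hddef, if_pos h2, if_neg h1]
            have hjB : P2.f (n - j) ∈ B := hP2int (n - j) (by omega) (by omega)
            rcases Nat.eq_zero_or_pos i with h0 | h0
            · have := hP2ind 0 (n - j) (by omega) (by omega) (by omega)
              rw [P2.h0] at this
              rw [h0, P1.h0]
              exact this
            · by_cases hi1 : i = P1.len
              · rw [hi1, P1.hl]
                have := hP2ind (n - j) P2.len (by omega) le_rfl (by omega)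
                rw [P2.hl] at this
                exact fun h => this h.symm
              · have hiA : P1.f i ∈ A := hP1int i h0 (by omega)
                exact hnoAB _ _ hiA hjB
          · simp only [hddef, if_neg h2, if_neg (by omega : ¬ (j ≤ P1.len))]
            have := hP2ind (n - j) (n - i) (by omega) (by omega) (by omega)
            exact fun h => this h.symm
      exact (hch n hn4).false (cycle_emb hn4 d hd_per hd_adj hd_inj hd_ind).some
    -- the side argument
    have hside : ∀ (c : V) (C : Set V), c ∈ C →
        (∀ v ∈ C, ∀ w, G.Adj v w → w ∉ S → w ∈ C) →
        (∃ z : V, z ∉ C ∪ S) → ∃ v ∈ C, IsSimplicial G v := by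
      intro c C hcC hCcl hz
      obtain ⟨z, hz⟩ := hz
      set T : Set V := C ∪ S with hTdef
      have hcardT : Fintype.card ↥T ≤ N := by
        have h1 : Fintype.card ↥T < Fintype.card V := by
          apply Fintype.card_lt_of_injective_of_notMem (Subtype.val) Subtype.val_injective (b := z)
          intro hmem
          obtain ⟨⟨w, hw⟩, rfl⟩ := hmem
          exact hz hw
        omega
      have hchT : Chordal (G.induce T) := by
        intro k hk
        refine ⟨fun e => ?_⟩
        exact (hch k hk).false ((SimpleGraph.Embedding.induce T).comp e)
      have hnbrT : ∀ v ∈ C, ∀ w, G.Adj v w → w ∈ T := by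
        intro v hv w h
        by_cases hw : w ∈ S
        · exact Or.inr hw
        · exact Or.inl (hCcl v hv w h hw)
      by_cases hcomp : ∀ u w : ↥T, u ≠ w → (G.induce T).Adj u w
      · refine ⟨c, hcC, ?_⟩
        intro u hu w hw huw
        have huT : u ∈ T := hnbrT c hcC u hu
        have hwT : w ∈ T := hnbrT c hcC w hw
        exact hcomp ⟨u, huT⟩ ⟨w, hwT⟩ (fun h => huw (congrArg Subtype.val h))
      · push_neg at hcomp
        obtain ⟨u, w, huw, hnuw⟩ := hcomp
        obtain ⟨v1, v2, hv12, hnv12, hs1, hs2⟩ := IH ↥T (G.induce T) hcardT hchT ⟨u, w, huw, hnuw⟩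
        have htrans : ∀ v : ↥T, ↑v ∈ C → IsSimplicial (G.induce T) v → IsSimplicial G ↑v := by
          intro v hvC hs
          intro p hp q hq hpq
          have hpT : p ∈ T := hnbrT _ hvC p hp
          have hqT : q ∈ T := hnbrT _ hvC q hq
          exact hs (show (⟨p, hpT⟩ : ↥T) ∈ (G.induce T).neighborSet v from hp)
            (show (⟨q, hqT⟩ : ↥T) ∈ (G.induce T).neighborSet v from hq)
            (fun h => hpq (congrArg Subtype.val h))
        have hcase : (↑v1 ∈ C) ∨ (↑v2 ∈ C) := by
          by_contra hcon
          push_neg at hcon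
          have h1 : (v1 : V) ∈ S := v1.2.resolve_left hcon.1
          have h2 : (v2 : V) ∈ S := v2.2.resolve_left hcon.2
          exact hnv12 (hSclique _ h1 _ h2 (fun h => hv12 (Subtype.ext h)))
        rcases hcase with h | h
        · exact ⟨↑v1, h, htrans v1 h hs1⟩
        · exact ⟨↑v2, h, htrans v2 h hs2⟩
    have hAcl : ∀ v ∈ A, ∀ w, G.Adj v w → w ∉ S → w ∈ A := fun v hv w h hw => reachSet_adj hv h hw
    have hBcl : ∀ v ∈ B, ∀ w, G.Adj v w → w ∉ S → w ∈ B := fun v hv w h hw => reachSet_adj hv h hw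
    obtain ⟨v, hvA, hsv⟩ := hside a A haA hAcl ⟨b, by
      rintro (h | h)
      · exact hAB b h hbB
      · exact hbS h⟩
    obtain ⟨w, hwB, hsw⟩ := hside b B hbB hBcl ⟨a, by
      rintro (h | h)
      · exact hAB a haA h
      · exact haS h⟩
    refine ⟨v, w, ?_, hnoAB v w hvA hwB, hsv, hsw⟩
    intro h
    exact hAB v hvA (h ▸ hwB)

theorem stmt_2 {V : Type*} [Fintype V] (G : SimpleGraph V) (hch : Chordal G)
    (hnc : ∃ u w : V, u ≠ w ∧ ¬ G.Adj u w) :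
    ∃ v w : V, v ≠ w ∧ ¬ G.Adj v w ∧ IsSimplicial G v ∧ IsSimplicial G w := by
  exact dirac_aux (Fintype.card V) V G le_rfl hch hnc
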